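/- Let α be an infinite limit ordinal of countable cofinality, and let {α_n}_{n<ω} be a strictly increasing cofinal sequence in α. For each n, let f_n be the transposition of [0, α] (with the order topology) swapping α_n + 1 and α_n + 2 and fixing all other points. Then each f_n is a homeomorphism of [0, α], f_n ≠ id for all n, and the sequence (f_n) converges uniformly to the identity of [0, α]. -/

import Mathlib

open Ordinal

lemma continuousAt_of_isOpen_singleton {X Y : Type*} [TopologicalSpace X] [TopologicalSpace Y]
    {f : X → Y} {x : X} (h : IsOpen {x}) : ContinuousAt f x := by
  rw [ContinuousAt, (isOpen_singleton_iff_nhds_eq_pure x).mp h, Filter.tendsto_pure_left]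
  exact fun s hs => mem_of_mem_nhds hs

lemma continuous_swap_of_isolated {X : Type*} [TopologicalSpace X] [T1Space X]
    [DecidableEq X] {p q : X} (hp : IsOpen {p}) (hq : IsOpen {q}) :
    Continuous (Equiv.swap p q) := by
  rw [continuous_iff_continuousAt]
  intro x
  by_cases hxp : x = p
  · subst hxp; exact continuousAt_of_isOpen_singleton hp
  by_cases hxq : x = q
  · subst hxq; exact continuousAt_of_isOpen_singleton hq
  · have hopen : IsOpen ({p, q} : Set X)ᶜ :=
      (Set.Finite.isClosed (by simp)).isOpen_compl
    have hx : x ∈ ({p, q} : Set X)ᶜ := by simp [hxp, hxq]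
    refine continuousAt_id.congr ?_
    filter_upwards [hopen.mem_nhds hx] with y hy
    simp only [Set.mem_compl_iff, Set.mem_insert_iff, Set.mem_singleton_iff, not_or] at hy
    exact (Equiv.swap_apply_of_ne_of_ne hy.1 hy.2).symm

theorem stmt15 (α : Ordinal) (hα : Order.IsSuccLimit α) (a : ℕ → Ordinal)
    (ha : StrictMono a) (ha' : ∀ n, a n < α) (hcof : ∀ ξ < α, ∃ n, ξ ≤ a n) :
    ∃ f : ℕ → (Set.Iic α ≃ₜ Set.Iic α),
      (∀ n, ∀ x : Set.Iic α,
        (f n x : Ordinal) = if (x : Ordinal) = a n + 1 then a n + 2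
          else if (x : Ordinal) = a n + 2 then a n + 1 else (x : Ordinal)) ∧
      (∀ n, f n ≠ Homeomorph.refl (Set.Iic α)) ∧
      (∀ U ∈ nhdsSet (Set.diagonal (Set.Iic α)),
        ∃ N : ℕ, ∀ n ≥ N, ∀ x : Set.Iic α, (f n x, x) ∈ U) := by
  classical
  have h1 : ∀ n, a n + 1 < α := fun n => by
    rw [Ordinal.add_one_eq_succ]; exact hα.succ_lt (ha' n)
  have h2' : ∀ n, a n + 2 = (a n + 1) + 1 := fun n => by
    rw [add_assoc, one_add_one_eq_two]
  have h2 : ∀ n, a n + 2 < α := fun n => by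
    rw [h2' n, Ordinal.add_one_eq_succ]; exact hα.succ_lt (h1 n)
  have hlt : ∀ n, a n + 1 < a n + 2 := fun n => by
    rw [h2' n]; exact lt_add_of_pos_right _ one_pos
  set P : ℕ → Set.Iic α := fun n => ⟨a n + 1, (h1 n).le⟩ with hP
  set Q : ℕ → Set.Iic α := fun n => ⟨a n + 2, (h2 n).le⟩ with hQ
  -- isolated points
  have isoP : ∀ n, IsOpen ({P n} : Set (Set.Iic α)) := by
    intro n
    have : ({P n} : Set (Set.Iic α)) = Subtype.val ⁻¹' Set.Ioo (a n) (a n + 2) := by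
      ext x
      simp only [Set.mem_singleton_iff, Set.mem_preimage, Set.mem_Ioo, hP]
      constructor
      · rintro rfl
        exact ⟨lt_add_of_pos_right _ one_pos, hlt n⟩
      · rintro ⟨hl, hr⟩
        have hl' : a n + 1 ≤ (x : Ordinal) := by
          rw [Ordinal.add_one_eq_succ, Order.succ_le_iff]; exact hl
        have hr' : (x : Ordinal) ≤ a n + 1 := by
          rw [h2' n, Ordinal.add_one_eq_succ, Order.lt_succ_iff] at hr; exact hr
        exact Subtype.ext (le_antisymm hr' hl')
    rw [this]
    exact (isOpen_Ioo).preimage continuous_subtype_val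
  have isoQ : ∀ n, IsOpen ({Q n} : Set (Set.Iic α)) := by
    intro n
    have : ({Q n} : Set (Set.Iic α)) = Subtype.val ⁻¹' Set.Ioo (a n + 1) (a n + 2 + 1) := by
      ext x
      simp only [Set.mem_singleton_iff, Set.mem_preimage, Set.mem_Ioo, hQ]
      constructor
      · rintro rfl
        exact ⟨hlt n, lt_add_of_pos_right _ one_pos⟩
      · rintro ⟨hl, hr⟩
        have hl' : a n + 2 ≤ (x : Ordinal) := by
          rw [h2' n, Ordinal.add_one_eq_succ, Order.succ_le_iff]; exact hl
        have hr' : (x : Ordinal) ≤ a n + 2 := by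
          rw [Ordinal.add_one_eq_succ, Order.lt_succ_iff] at hr; exact hr
        exact Subtype.ext (le_antisymm hr' hl')
    rw [this]
    exact (isOpen_Ioo).preimage continuous_subtype_val
  have hPQ : ∀ n, P n ≠ Q n := by
    intro n h
    exact (hlt n).ne (congrArg Subtype.val h)
  refine ⟨fun n => ⟨Equiv.swap (P n) (Q n),
      continuous_swap_of_isolated (isoP n) (isoQ n),
      continuous_swap_of_isolated (isoP n) (isoQ n)⟩,
    ?_, ?_, ?_⟩
  · intro n x
    show ((Equiv.swap (P n) (Q n)) x : Ordinal) = _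
    rw [Equiv.swap_apply_def]
    have e1 : (x = P n) = ((x : Ordinal) = a n + 1) := by
      simp [Subtype.ext_iff, hP]
    have e2 : (x = Q n) = ((x : Ordinal) = a n + 2) := by
      simp [Subtype.ext_iff, hQ]
    split_ifs with hA hB hC hD <;>
      simp_all [hP, hQ]
  · intro n h
    have := congrFun (congrArg (fun g : Set.Iic α ≃ₜ Set.Iic α => (g : Set.Iic α → Set.Iic α)) h) (P n)
    simp only [Homeomorph.refl_apply, id_eq] at this
    rw [show ((⟨Equiv.swap (P n) (Q n),
      continuous_swap_of_isolated (isoP n) (isoQ n),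
      continuous_swap_of_isolated (isoP n) (isoQ n)⟩ :
        Set.Iic α ≃ₜ Set.Iic α) : Set.Iic α → Set.Iic α) = Equiv.swap (P n) (Q n) from rfl,
      Equiv.swap_apply_left] at this
    exact hPQ n this.symm
  · intro U hU
    set top : Set.Iic α := ⟨α, le_refl α⟩ with htop
    have hdiag : (top, top) ∈ Set.diagonal (Set.Iic α) := rfl
    have hUnhds : U ∈ nhds (top, top) := mem_nhdsSet_iff_forall.mp hU _ hdiag
    -- sequences tend to α
    have key : ∀ (b : ℕ → Ordinal), (∀ n, b n < α) → (∀ n, a n ≤ b n) →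
        Filter.Tendsto b Filter.atTop (nhds α) := by
      intro b hb hab
      rw [tendsto_order]
      constructor
      · intro c hc
        obtain ⟨N, hN⟩ := hcof c hc
        filter_upwards [Filter.eventually_ge_atTop (N + 1)] with n hn
        calc c ≤ a N := hN
          _ < a n := ha (by omega)
          _ ≤ b n := hab n
      · intro c hc
        exact Filter.Eventually.of_forall fun n => (hb n).trans hc
    have tP : Filter.Tendsto P Filter.atTop (nhds top) := by
      rw [Topology.IsEmbedding.subtypeVal.tendsto_nhds_iff]
      exact key _ h1 (fun n => le_of_lt (lt_add_of_pos_right _ one_pos))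
    have tQ : Filter.Tendsto Q Filter.atTop (nhds top) := by
      rw [Topology.IsEmbedding.subtypeVal.tendsto_nhds_iff]
      refine key _ h2 (fun n => ?_)
      exact le_of_lt (lt_add_of_pos_right _ (by norm_num))
    have tQP : Filter.Tendsto (fun n => (Q n, P n)) Filter.atTop (nhds (top, top)) :=
      tQ.prodMk_nhds tP
    have tPQ : Filter.Tendsto (fun n => (P n, Q n)) Filter.atTop (nhds (top, top)) :=
      tP.prodMk_nhds tQ
    obtain ⟨N1, hN1⟩ := (Filter.eventually_atTop).mp (tQP.eventually_mem hUnhds)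
    obtain ⟨N2, hN2⟩ := (Filter.eventually_atTop).mp (tPQ.eventually_mem hUnhds)
    refine ⟨max N1 N2, fun n hn x => ?_⟩
    have hdsub : Set.diagonal (Set.Iic α) ⊆ U := subset_of_mem_nhdsSet hU
    by_cases hxp : x = P n
    · subst hxp
      show ((Equiv.swap (P n) (Q n)) (P n), P n) ∈ U
      rw [Equiv.swap_apply_left]
      exact hN1 n (le_trans (le_max_left _ _) hn)
    by_cases hxq : x = Q n
    · subst hxq
      show ((Equiv.swap (P n) (Q n)) (Q n), Q n) ∈ U
      rw [Equiv.swap_apply_right]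
      exact hN2 n (le_trans (le_max_right _ _) hn)
    · show ((Equiv.swap (P n) (Q n)) x, x) ∈ U
      rw [Equiv.swap_apply_of_ne_of_ne hxp hxq]
      exact hdsub rfl
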